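/- For every positive integer k, Σ_{i=0}^{k} (k choose i)·|k−2i|^k ≤ 2·k^k·(1+e^{−2})^k. -/

import Mathlib

lemma aux_pow_le (k j : ℕ) (hk : 1 ≤ k) (hj : 2 * j ≤ k) :
    ((k : ℝ) - 2 * j) ^ k ≤ (k : ℝ) ^ k * Real.exp (-2) ^ j := by
  have hk0 : (0:ℝ) < k := by exact_mod_cast hk
  have hjk : (2 * j : ℝ) ≤ k := by exact_mod_cast hj
  push_cast at hjk
  have hbase : (0:ℝ) ≤ (k:ℝ) - 2 * j := by linarith
  have h1 : (k:ℝ) - 2 * j ≤ k * Real.exp (-(2*j)/k) := by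
    have he := Real.add_one_le_exp (-(2*(j:ℝ))/k)
    have h2 : (k:ℝ) * (-(2*j)/k + 1) ≤ k * Real.exp (-(2*j)/k) :=
      mul_le_mul_of_nonneg_left he (le_of_lt hk0)
    have h3 : (k:ℝ) * (-(2*j)/k + 1) = k - 2*j := by
      field_simp
      ring
    linarith
  calc ((k:ℝ) - 2*j)^k ≤ ((k:ℝ) * Real.exp (-(2*j)/k))^k :=
        pow_le_pow_left₀ hbase h1 k
    _ = (k:ℝ)^k * Real.exp (-2)^j := by
        rw [mul_pow, ← Real.exp_nat_mul, ← Real.exp_nat_mul]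
        congr 1
        field_simp

/-- For every positive integer `k`,
`∑ i in range (k+1), (k choose i) * |k - 2i|^k ≤ 2 * k^k * (1 + e^{-2})^k`. -/
theorem binomial_abs_sum_le (k : ℕ) (hk : 1 ≤ k) :
    ∑ i ∈ Finset.range (k + 1),
        (k.choose i : ℝ) * |(k : ℝ) - 2 * i| ^ k
      ≤ 2 * (k : ℝ) ^ k * (1 + Real.exp (-2)) ^ k := by
  set e2 := Real.exp (-2) with he2def
  have he2 : (0:ℝ) ≤ e2 := (Real.exp_pos _).le
  set g : ℕ → ℝ := fun i => (k.choose i : ℝ) * (k:ℝ)^k * e2^i with hg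
  have key : ∀ i ∈ Finset.range (k+1),
      (k.choose i : ℝ) * |(k : ℝ) - 2 * i| ^ k ≤ g i + g (k - i) := by
    intro i hi
    rw [Finset.mem_range, Nat.lt_succ_iff] at hi
    have hg1 : 0 ≤ g i := by positivity
    have hg2 : 0 ≤ g (k - i) := by positivity
    have hC : 0 ≤ (k.choose i : ℝ) := by positivity
    rcases le_or_gt (2*i) k with h | h
    · have habs : |(k:ℝ) - 2*i| = (k:ℝ) - 2*i := by
        rw [abs_of_nonneg]
        have : (2*i:ℝ) ≤ k := by exact_mod_cast h
        linarith
      rw [habs]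
      have := mul_le_mul_of_nonneg_left (aux_pow_le k i hk h) hC
      calc (k.choose i : ℝ) * ((k:ℝ) - 2*i)^k
          ≤ (k.choose i : ℝ) * ((k:ℝ)^k * e2^i) := this
        _ = g i := by simp [hg]; ring
        _ ≤ g i + g (k - i) := le_add_of_nonneg_right hg2
    · have hj : 2 * (k - i) ≤ k := by omega
      have hki : ((k - i : ℕ) : ℝ) = (k:ℝ) - i := by
        have : i ≤ k := hi
        push_cast [this]
        ring
      have habs : |(k:ℝ) - 2*i| = (k:ℝ) - 2*((k-i:ℕ):ℝ) := by
        rw [hki, abs_of_nonpos]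
        · ring
        · have : (k:ℝ) < 2*i := by exact_mod_cast h
          linarith
      rw [habs]
      have hchoose : (k.choose i : ℝ) = (k.choose (k-i) : ℝ) := by
        rw [Nat.choose_symm hi]
      rw [hchoose]
      have hC' : 0 ≤ (k.choose (k-i) : ℝ) := by positivity
      have := mul_le_mul_of_nonneg_left (aux_pow_le k (k-i) hk hj) hC'
      calc (k.choose (k-i) : ℝ) * ((k:ℝ) - 2*((k-i:ℕ):ℝ))^k
          ≤ (k.choose (k-i) : ℝ) * ((k:ℝ)^k * e2^(k-i)) := this
        _ = g (k - i) := by simp [hg]; ring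
        _ ≤ g i + g (k - i) := le_add_of_nonneg_left hg1
  have step1 : ∑ i ∈ Finset.range (k + 1),
      (k.choose i : ℝ) * |(k : ℝ) - 2 * i| ^ k
      ≤ ∑ i ∈ Finset.range (k+1), (g i + g (k - i)) :=
    Finset.sum_le_sum key
  have reflect : ∑ i ∈ Finset.range (k+1), g (k - i)
      = ∑ i ∈ Finset.range (k+1), g i := by
    have := Finset.sum_range_reflect g (k+1)
    simpa using this
  have binom : ∑ i ∈ Finset.range (k+1), g i
      = (k:ℝ)^k * (1 + e2)^k := by
    have := add_pow e2 1 k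
    simp only [one_pow, mul_one] at this
    rw [hg]
    simp only []
    calc ∑ i ∈ Finset.range (k+1), (k.choose i : ℝ) * (k:ℝ)^k * e2^i
        = (k:ℝ)^k * ∑ i ∈ Finset.range (k+1), e2^i * (k.choose i : ℝ) := by
          rw [Finset.mul_sum]; apply Finset.sum_congr rfl; intro i _; ring
      _ = (k:ℝ)^k * (e2 + 1)^k := by rw [this]
      _ = (k:ℝ)^k * (1 + e2)^k := by ring
  calc ∑ i ∈ Finset.range (k + 1), (k.choose i : ℝ) * |(k : ℝ) - 2 * i| ^ k
      ≤ ∑ i ∈ Finset.range (k+1), (g i + g (k - i)) := step1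
    _ = ∑ i ∈ Finset.range (k+1), g i + ∑ i ∈ Finset.range (k+1), g (k-i) := by
        rw [Finset.sum_add_distrib]
    _ = 2 * ((k:ℝ)^k * (1 + e2)^k) := by rw [reflect, binom]; ring
    _ = 2 * (k:ℝ)^k * (1 + e2)^k := by ring
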